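/- Deduction theorem for know-how entailment: for any PL-formula α and any sets Γ, Γ' of PL-formulas with Γ finite and nonempty, Kh(Γ' ∪ Γ) ⊨ Kh α if and only if Kh Γ' ⊨ Kh(⋀_{γ∈Γ} γ → α), where Kh Δ = {Kh δ : δ ∈ Δ} and ⋀_{γ∈Γ} γ is the conjunction of the members of Γ. -/

import Mathlib

/-- Formulas of the propositional language `PL` over atoms `P`. -/
inductive PLForm (P : Type) : Type
  | atom : P → PLForm P
  | bot  : PLForm P
  | and  : PLForm P → PLForm P → PLForm P
  | or   : PLForm P → PLForm P → PLForm P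
  | imp  : PLForm P → PLForm P → PLForm P

/-- `¬α` abbreviates `α → ⊥`. -/
def PLForm.neg {P : Type} (α : PLForm P) : PLForm P := α.imp .bot

/-- The resolution space `S(α)`, realized as a type: `S(p)` and `S(⊥)` are
singletons, `S(α∨β)` is the disjoint union, `S(α∧β)` the product, and
`S(α→β)` the full function space. -/
def RS (P : Type) : PLForm P → Type
  | .atom _  => Unit
  | .bot     => Unit
  | .or a b  => RS P a ⊕ RS P b
  | .and a b => RS P a × RS P b
  | .imp a b => RS P a → RS P b

/-- An epistemic (information) model over atoms `P` with worlds `W`: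
`W` is nonempty and `V` a valuation. -/
structure Model (P W : Type) where
  ne : Nonempty W
  V : W → Set P

/-- The actual resolutions `R(w,α) ⊆ S(α)` at a world `w`. -/
def Res {P W : Type} (M : Model P W) (w : W) : (α : PLForm P) → Set (RS P α)
  | .atom p  => {_u : Unit | p ∈ M.V w}
  | .bot     => ∅
  | .or a b  => (Sum.inl '' Res M w a) ∪ (Sum.inr '' Res M w b)
  | .and a b => (Res M w a) ×ˢ (Res M w b)
  | .imp a b => {f : RS P a → RS P b | f '' Res M w a ⊆ Res M w b}

/-- Formulas of the dynamic epistemic language `DELKh`. -/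
inductive DForm (P : Type) : Type
  | atom : P → DForm P
  | bot  : DForm P
  | and  : DForm P → DForm P → DForm P
  | or   : DForm P → DForm P → DForm P
  | imp  : DForm P → DForm P → DForm P
  | K    : DForm P → DForm P
  | box  : DForm P → DForm P
  | kh   : PLForm P → DForm P

def DForm.neg {P : Type} (φ : DForm P) : DForm P := φ.imp .bot
def DForm.dia {P : Type} (φ : DForm P) : DForm P := (DForm.box φ.neg).neg
def DForm.biImp {P : Type} (φ ψ : DForm P) : DForm P := (φ.imp ψ).and (ψ.imp φ)

/-- Embedding of `PL` into `DELKh`. -/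
def PLForm.toD {P : Type} : PLForm P → DForm P
  | .atom p  => .atom p
  | .bot     => .bot
  | .and a b => (toD a).and (toD b)
  | .or a b  => (toD a).or (toD b)
  | .imp a b => (toD a).imp (toD b)

/-- The submodel of `M` determined by a nonempty set `s` of worlds,
with the restricted valuation. -/
def Model.restrict {P W : Type} (M : Model P W) (s : Set W) (h : s.Nonempty) :
    Model P s :=
  { ne := ⟨⟨h.choose, h.choose_spec⟩⟩, V := fun w => M.V w.1 }

/-- Satisfaction of `DELKh`-formulas at a pointed model `(M,w)`. -/
def Sat (P : Type) : (W : Type) → Model P W → W → DForm P → Prop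
  | _, M, w, .atom p  => p ∈ M.V w
  | _, _, _, .bot     => False
  | W, M, w, .and a b => Sat P W M w a ∧ Sat P W M w b
  | W, M, w, .or a b  => Sat P W M w a ∨ Sat P W M w b
  | W, M, w, .imp a b => Sat P W M w a → Sat P W M w b
  | W, M, _, .K φ     => ∀ v : W, Sat P W M v φ
  | W, M, w, .box φ   =>
      ∀ (s : Set W) (h : w ∈ s), Sat P s (M.restrict s ⟨w, h⟩) ⟨w, h⟩ φ
  | W, M, _, .kh α    => ∃ x : RS P α, ∀ v : W, x ∈ Res M v α

/-- A `DELKh`-formula is valid if it holds at every pointed model. -/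
def Valid {P : Type} (φ : DForm P) : Prop :=
  ∀ (W : Type) (M : Model P W) (w : W), Sat P W M w φ

/-- Semantic entailment from a set of `DELKh`-formulas. -/
def EntailsSet {P : Type} (Γ : Set (DForm P)) (φ : DForm P) : Prop :=
  ∀ (W : Type) (M : Model P W) (w : W),
    (∀ ψ ∈ Γ, Sat P W M w ψ) → Sat P W M w φ

/-- Classical satisfaction of `PL`-formulas at a pointed model. -/
def PLSat {P W : Type} (M : Model P W) (w : W) : PLForm P → Prop
  | .atom p  => p ∈ M.V w
  | .bot     => False
  | .and a b => PLSat M w a ∧ PLSat M w b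
  | .or a b  => PLSat M w a ∨ PLSat M w b
  | .imp a b => PLSat M w a → PLSat M w b

/-- Inquisitive support of `PL`-formulas at a state `s` of a model `M`. -/
def Support (P W : Type) (M : Model P W) : Set W → PLForm P → Prop
  | s, .atom p  => ∀ w ∈ s, p ∈ M.V w
  | s, .bot     => s = ∅
  | s, .and a b => Support P W M s a ∧ Support P W M s b
  | s, .or a b  => Support P W M s a ∨ Support P W M s b
  | s, .imp a b => ∀ t ⊆ s, Support P W M t a → Support P W M t b

/-- The conjunction of the members of a (nonempty) finite list of formulas. -/
def bigAnd {P : Type} : List (PLForm P) → PLForm P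
  | []        => PLForm.bot.imp .bot
  | [a]       => a
  | a :: rest => a.and (bigAnd rest)

lemma rs_nonempty {P : Type} (α : PLForm P) : Nonempty (RS P α) := by
  induction α with
  | atom p => exact ⟨()⟩
  | bot => exact ⟨()⟩
  | and a b iha ihb => exact ⟨(iha.some, ihb.some)⟩
  | or a b iha ihb => exact ⟨Sum.inl iha.some⟩
  | imp a b iha ihb => exact ⟨fun _ => ihb.some⟩

lemma res_restrict {P W : Type} (M : Model P W) (s : Set W) (h : s.Nonempty)
    (u : s) (α : PLForm P) :
    Res (M.restrict s h) u α = Res M u.1 α := by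
  induction α with
  | atom p => rfl
  | bot => rfl
  | and a b iha ihb => simp only [Res, iha, ihb]; rfl
  | or a b iha ihb => simp only [Res, iha, ihb]
  | imp a b iha ihb => simp only [Res, iha, ihb]

lemma bigAnd_proj {P W : Type} (M : Model P W) :
    ∀ (Γ : List (PLForm P)) (γ : PLForm P), γ ∈ Γ →
      ∃ proj : RS P (bigAnd Γ) → RS P γ,
        ∀ (v : W) (X : RS P (bigAnd Γ)), X ∈ Res M v (bigAnd Γ) →
          proj X ∈ Res M v γ := by
  intro Γ
  induction Γ with
  | nil => intro γ hγ; exact absurd hγ List.not_mem_nil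
  | cons a rest ih =>
    intro γ hγ
    cases rest with
    | nil =>
      have : γ = a := by simpa using hγ
      subst this
      exact ⟨id, fun v X hX => hX⟩
    | cons b rest' =>
      rcases List.mem_cons.mp hγ with h | h
      · subst h
        exact ⟨Prod.fst, fun v X hX => hX.1⟩
      · obtain ⟨p, hp⟩ := ih γ h
        exact ⟨fun X => p X.2, fun v X hX => hp v X.2 hX.2⟩

lemma bigAnd_combine {P W : Type} (M : Model P W) :
    ∀ (Γ : List (PLForm P)), Γ ≠ [] →
      (∀ γ ∈ Γ, ∃ x : RS P γ, ∀ v : W, x ∈ Res M v γ) →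
      ∃ X : RS P (bigAnd Γ), ∀ v : W, X ∈ Res M v (bigAnd Γ) := by
  intro Γ
  induction Γ with
  | nil => intro h; exact absurd rfl h
  | cons a rest ih =>
    intro _ hall
    cases rest with
    | nil => exact hall a List.mem_cons_self
    | cons b rest' =>
      obtain ⟨x, hx⟩ := hall a List.mem_cons_self
      obtain ⟨Y, hY⟩ := ih (by simp) (fun γ hγ => hall γ (List.mem_cons_of_mem a hγ))
      exact ⟨(x, Y), fun v => ⟨hx v, hY v⟩⟩

/-- deduction theorem for know-how entailment:
for finite nonempty `Γ` (given as a list) and any set `Γ'`,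
`Kh(Γ' ∪ Γ) ⊨ Kh α` iff `Kh Γ' ⊨ Kh(⋀Γ → α)`. -/
theorem kh_deduction_theorem {P : Type} [Countable P] (Γ' : Set (PLForm P))
    (Γ : List (PLForm P)) (hΓ : Γ ≠ []) (α : PLForm P) :
    EntailsSet (DForm.kh '' (Γ' ∪ {γ | γ ∈ Γ})) (.kh α) ↔
      EntailsSet (DForm.kh '' Γ') (.kh ((bigAnd Γ).imp α)) := by
  classical
  constructor
  · intro h W M w hΓ'
    have key : ∀ X : RS P (bigAnd Γ), ∃ y : RS P α,
        ∀ v : W, X ∈ Res M v (bigAnd Γ) → y ∈ Res M v α := by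
      intro X
      by_cases hs : {v : W | X ∈ Res M v (bigAnd Γ)}.Nonempty
      · set s : Set W := {v : W | X ∈ Res M v (bigAnd Γ)} with hsdef
        have hw : hs.choose ∈ s := hs.choose_spec
        have hsat : ∀ ψ ∈ DForm.kh '' (Γ' ∪ {γ | γ ∈ Γ}),
            Sat P s (M.restrict s hs) ⟨hs.choose, hw⟩ ψ := by
          rintro ψ ⟨γ, hγ, rfl⟩
          rcases hγ with hγ' | hγΓ
          · obtain ⟨x, hx⟩ := hΓ' (.kh γ) ⟨γ, hγ', rfl⟩
            exact ⟨x, fun u => by rw [res_restrict]; exact hx u.1⟩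
          · obtain ⟨proj, hproj⟩ := bigAnd_proj M Γ γ hγΓ
            exact ⟨proj X, fun u => by rw [res_restrict]; exact hproj u.1 X u.2⟩
        obtain ⟨y, hy⟩ := h s (M.restrict s hs) ⟨hs.choose, hw⟩ hsat
        refine ⟨y, fun v hv => ?_⟩
        have := hy ⟨v, hv⟩
        rwa [res_restrict] at this
      · exact ⟨(rs_nonempty α).some, fun v hv => absurd ⟨v, hv⟩ hs⟩
    choose f hf using key
    refine ⟨f, fun v => ?_⟩
    rintro y ⟨X, hX, rfl⟩
    exact hf X v hX
  · intro h W M w hall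
    have hΓ' : ∀ ψ ∈ DForm.kh '' Γ', Sat P W M w ψ := by
      rintro ψ ⟨γ, hγ, rfl⟩
      exact hall (.kh γ) ⟨γ, Or.inl hγ, rfl⟩
    obtain ⟨f, hf⟩ := h W M w hΓ'
    have hγs : ∀ γ ∈ Γ, ∃ x : RS P γ, ∀ v : W, x ∈ Res M v γ := fun γ hγ =>
      hall (.kh γ) ⟨γ, Or.inr hγ, rfl⟩
    obtain ⟨X, hX⟩ := bigAnd_combine M Γ hΓ hγs
    exact ⟨f X, fun v => hf v (Set.mem_image_of_mem f (hX v))⟩
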